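/- Let G = (V,E) be a simple undirected graph (no self-loops), let k ≥ 2, and set w = k + 1. Let G' be the graph obtained from G by adding two new vertices a and b, adding a self-loop at a and a self-loop at b, and adding the edges {a,u} and {b,u} for every u ∈ V (a and b are not adjacent to each other). Then G contains a clique on k vertices if and only if G' admits a w-realization. -/

import Mathlib

/-- The sequence (di)graph of `x` with window size `w` has an arc `(u,v)` exactly when
there are positions `k < k' < k + w` with `x_k = u` and `x_{k'} = v`. -/
def seqArc {V : Type*} (w : ℕ) (x : List V) (u v : V) : Prop :=
  ∃ k k' : ℕ, k < k' ∧ k' < k + w ∧ x[k]? = some u ∧ x[k']? = some v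

/-- Edge of the (undirected) sequence graph of `x` with window size `w`. -/
def seqEdge {V : Type*} (w : ℕ) (x : List V) (u v : V) : Prop :=
  seqArc w x u v ∨ seqArc w x v u

/-- `x` is a `w`-realization of the undirected graph on vertex set `V` (self-loops allowed)
with adjacency relation `Adj`. -/
def IsRealizationG {V : Type*} (w : ℕ) (Adj : V → V → Prop) (x : List V) : Prop :=
  x ≠ [] ∧ (∀ v : V, v ∈ x) ∧ ∀ u v : V, Adj u v ↔ seqEdge w x u v

/-- The graph `G'` obtained from `G` by adding two new vertices `a = Sum.inr true` and
`b = Sum.inr false` with self-loops, each adjacent to every vertex of `G` but not to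
each other. -/
def cliqueExtAdj {V : Type*} (Adj : V → V → Prop) : (V ⊕ Bool) → (V ⊕ Bool) → Prop
  | Sum.inl u, Sum.inl v => Adj u v
  | Sum.inl _, Sum.inr _ => True
  | Sum.inr _, Sum.inl _ => True
  | Sum.inr s, Sum.inr t => s = t

section AuxLemmas

variable {V : Type*}

private lemma ceSymm (Adj : V → V → Prop) (h : Symmetric Adj) :
    Symmetric (cliqueExtAdj Adj) := by
  rintro (u | s) (v | t) hadj
  · exact h hadj
  · trivial
  · trivial
  · exact hadj.symm

private lemma ceA_left {Adj : V → V → Prop} {z : V ⊕ Bool} (hz : z ≠ Sum.inr false) :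
    cliqueExtAdj Adj z (Sum.inr true) := by
  rcases z with u | s
  · trivial
  · cases s
    · exact absurd rfl hz
    · rfl

private lemma ceA_right {Adj : V → V → Prop} {z : V ⊕ Bool} (hz : z ≠ Sum.inr false) :
    cliqueExtAdj Adj (Sum.inr true) z := by
  rcases z with u | s
  · trivial
  · cases s
    · exact absurd rfl hz
    · rfl

/-- The position-indexed value function for our realization:
first a region of blocks `[p.1, p.2, A^k]` (one for each `p ∈ pa`),
then the clique list `cl`, then blocks `[B^k, v]` (one for each `v ∈ vb`),
then a final `B^k`. -/
private def bf {W : Type*} (k : ℕ) (pa : List (W × W)) (cl : List W) (vb : List W)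
    (A B : W) (i : ℕ) : W :=
  if i < pa.length * (k+2) then
    if i % (k+2) = 0 then ((pa[i/(k+2)]?).map Prod.fst).getD A
    else if i % (k+2) = 1 then ((pa[i/(k+2)]?).map Prod.snd).getD A
    else A
  else if i < pa.length * (k+2) + cl.length then
    (cl[i - pa.length * (k+2)]?).getD A
  else if (i - (pa.length * (k+2) + cl.length)) % (k+1) = k then
    (vb[(i - (pa.length * (k+2) + cl.length)) / (k+1)]?).getD B
  else B

private lemma bf_A {W : Type*} (k : ℕ) (pa : List (W × W)) (cl vb : List W) (A B : W)
    {q r : ℕ} (hq : q < pa.length) (hr : r < k + 2) :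
    bf k pa cl vb A B (q * (k+2) + r)
      = if r = 0 then (pa[q]).1 else if r = 1 then (pa[q]).2 else A := by
  have h2 : q * (k+2) + r < (q+1) * (k+2) := by rw [Nat.add_mul, one_mul]; omega
  have h1 : q * (k+2) + r < pa.length * (k+2) :=
    lt_of_lt_of_le h2 (Nat.mul_le_mul_right _ hq)
  have hmod : (q * (k+2) + r) % (k+2) = r := by
    rw [Nat.mul_comm, Nat.mul_add_mod, Nat.mod_eq_of_lt hr]
  have hdiv : (q * (k+2) + r) / (k+2) = q := by
    rw [Nat.mul_comm, Nat.mul_add_div (by omega), Nat.div_eq_of_lt hr, Nat.add_zero]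
  simp only [bf, if_pos h1, hmod, hdiv, List.getElem?_eq_getElem hq, Option.map_some,
    Option.getD_some]

private lemma bf_C {W : Type*} (k : ℕ) (pa : List (W × W)) (cl vb : List W) (A B : W)
    {t : ℕ} (ht : t < cl.length) :
    bf k pa cl vb A B (pa.length * (k+2) + t) = cl[t] := by
  have h1 : ¬ (pa.length * (k+2) + t < pa.length * (k+2)) := by omega
  have h2 : pa.length * (k+2) + t < pa.length * (k+2) + cl.length := by omega
  have h3 : pa.length * (k+2) + t - pa.length * (k+2) = t := by omega
  simp only [bf, if_neg h1, if_pos h2, h3, List.getElem?_eq_getElem ht, Option.getD_some]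

private lemma bf_Bm {W : Type*} (k : ℕ) (pa : List (W × W)) (cl vb : List W) (A B : W)
    (m : ℕ) :
    bf k pa cl vb A B (pa.length * (k+2) + cl.length + m)
      = if m % (k+1) = k then (vb[m/(k+1)]?).getD B else B := by
  have h1 : ¬ (pa.length * (k+2) + cl.length + m < pa.length * (k+2)) := by omega
  have h2 : ¬ (pa.length * (k+2) + cl.length + m < pa.length * (k+2) + cl.length) := by
    omega
  have h3 : pa.length * (k+2) + cl.length + m - (pa.length * (k+2) + cl.length) = m := by
    omega
  simp only [bf, if_neg h1, if_neg h2, h3]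

private lemma bf_Bslot {W : Type*} (k : ℕ) (pa : List (W × W)) (cl vb : List W) (A B : W)
    {q : ℕ} (hq : q < vb.length) :
    bf k pa cl vb A B (pa.length * (k+2) + cl.length + (q * (k+1) + k)) = vb[q] := by
  have hmod : (q * (k+1) + k) % (k+1) = k := by
    rw [Nat.mul_comm, Nat.mul_add_mod, Nat.mod_eq_of_lt (by omega)]
  have hdiv : (q * (k+1) + k) / (k+1) = q := by
    rw [Nat.mul_comm, Nat.mul_add_div (by omega), Nat.div_eq_of_lt (by omega),
      Nat.add_zero]
  rw [bf_Bm, if_pos hmod, hdiv, List.getElem?_eq_getElem hq, Option.getD_some]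

/-- Soundness: any two positions within window distance `k` get adjacent values. -/
private lemma bf_sound (Adj : V → V → Prop) {k : ℕ} (hk : 2 ≤ k)
    (pa : List ((V ⊕ Bool) × (V ⊕ Bool))) (clV vbV : List V)
    (hpa : ∀ p ∈ pa, cliqueExtAdj Adj p.1 p.2 ∧ p.1 ≠ Sum.inr false ∧ p.2 ≠ Sum.inr false)
    (hcl : clV.length = k)
    (hclAdj : ∀ (s t : ℕ) (hs : s < clV.length) (ht : t < clV.length),
      s ≠ t → Adj clV[s] clV[t])
    {i j : ℕ} (hij : i < j) (hjk : j ≤ i + k) :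
    cliqueExtAdj Adj
      (bf k pa (clV.map Sum.inl) (vbV.map Sum.inl) (Sum.inr true) (Sum.inr false) i)
      (bf k pa (clV.map Sum.inl) (vbV.map Sum.inl) (Sum.inr true) (Sum.inr false) j) := by
  classical
  have hpos : 0 < k + 2 := by omega
  have hclen : (clV.map (Sum.inl : V → V ⊕ Bool)).length = k := by
    rw [List.length_map, hcl]
  -- shape of values in the B region
  have hBshape : ∀ m : ℕ,
      bf k pa (clV.map Sum.inl) (vbV.map Sum.inl) (Sum.inr true) (Sum.inr false)
        (pa.length * (k+2) + (clV.map (Sum.inl : V → V ⊕ Bool)).length + m)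
        = Sum.inr false ∨
      ∃ v : V, bf k pa (clV.map Sum.inl) (vbV.map Sum.inl) (Sum.inr true) (Sum.inr false)
        (pa.length * (k+2) + (clV.map (Sum.inl : V → V ⊕ Bool)).length + m)
        = Sum.inl v := by
    intro m
    rw [bf_Bm]
    by_cases hm : m % (k+1) = k
    · rw [if_pos hm]
      rcases h : (vbV.map (Sum.inl : V → V ⊕ Bool))[m/(k+1)]? with _ | z
      · left; rfl
      · right
        obtain ⟨hlt, hz⟩ := List.getElem?_eq_some_iff.1 h
        refine ⟨vbV[m / (k+1)]'(by simpa using hlt), ?_⟩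
        rw [Option.getD_some, ← hz, List.getElem_map]
    · rw [if_neg hm]; left; rfl
  -- case on the region of i
  rcases Nat.lt_or_ge i (pa.length * (k+2)) with hiA | hiR
  · -- i in the A region
    obtain ⟨qi, ri, hqi, hri, rfl⟩ :
        ∃ q r, q < pa.length ∧ r < k + 2 ∧ i = q * (k+2) + r :=
      ⟨i / (k+2), i % (k+2), (Nat.div_lt_iff_lt_mul hpos).2 hiA, Nat.mod_lt _ hpos,
        (Nat.div_add_mod' i (k+2)).symm⟩
    rcases Nat.lt_or_ge j (pa.length * (k+2)) with hjA | hjR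
    · -- j in the A region
      obtain ⟨qj, rj, hqj, hrj, rfl⟩ :
          ∃ q r, q < pa.length ∧ r < k + 2 ∧ j = q * (k+2) + r :=
        ⟨j / (k+2), j % (k+2), (Nat.div_lt_iff_lt_mul hpos).2 hjA, Nat.mod_lt _ hpos,
          (Nat.div_add_mod' j (k+2)).symm⟩
      rw [bf_A k pa _ _ _ _ hqi hri, bf_A k pa _ _ _ _ hqj hrj]
      rcases Nat.lt_or_ge ri 2 with hri2 | hri2
      · rcases Nat.lt_or_ge rj 2 with hrj2 | hrj2
        · -- both slots: must be the same block, consecutive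
          have hqq : qi = qj := by
            rcases Nat.lt_trichotomy qi qj with hlt | heq | hgt
            · exfalso
              have hmul : (qi+1) * (k+2) ≤ qj * (k+2) := Nat.mul_le_mul_right _ hlt
              rw [Nat.add_mul, one_mul] at hmul
              omega
            · exact heq
            · exfalso
              have hmul : (qj+1) * (k+2) ≤ qi * (k+2) := Nat.mul_le_mul_right _ hgt
              rw [Nat.add_mul, one_mul] at hmul
              omega
          subst hqq
          have hri0 : ri = 0 := by omega
          have hrj1 : rj = 1 := by omega
          subst hri0; subst hrj1
          simp only [if_pos rfl, if_neg (by omega : (1:ℕ) ≠ 0), if_pos rfl]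
          exact (hpa _ (List.getElem_mem hqi)).1
        · -- vj = A
          have hrj0 : rj ≠ 0 := by omega
          have hrj1 : rj ≠ 1 := by omega
          rw [if_neg hrj0, if_neg hrj1]
          rcases (by omega : ri = 0 ∨ ri = 1) with h0 | h1
          · subst h0; rw [if_pos rfl]
            exact ceA_left (hpa _ (List.getElem_mem hqi)).2.1
          · subst h1
            rw [if_neg (by omega : (1:ℕ) ≠ 0), if_pos rfl]
            exact ceA_left (hpa _ (List.getElem_mem hqi)).2.2
      · -- vi = A
        have hri0 : ri ≠ 0 := by omega
        have hri1 : ri ≠ 1 := by omega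
        rw [if_neg hri0, if_neg hri1]
        by_cases hrj0 : rj = 0
        · subst hrj0; rw [if_pos rfl]
          exact ceA_right (hpa _ (List.getElem_mem hqj)).2.1
        · by_cases hrj1 : rj = 1
          · subst hrj1; rw [if_neg hrj0, if_pos rfl]
            exact ceA_right (hpa _ (List.getElem_mem hqj)).2.2
          · rw [if_neg hrj0, if_neg hrj1]; rfl
    · -- j beyond the A region; vi must be a filler A, or contradiction
      have hfar : (qi+1) * (k+2) ≤ pa.length * (k+2) := Nat.mul_le_mul_right _ hqi
      rw [Nat.add_mul, one_mul] at hfar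
      rcases Nat.lt_or_ge ri 2 with hri2 | hri2
      · -- slot: too far from the rest
        exfalso; omega
      · -- vi = A
        rw [bf_A k pa _ _ _ _ hqi hri, if_neg (by omega : ri ≠ 0),
          if_neg (by omega : ri ≠ 1)]
        rcases Nat.lt_or_ge j (pa.length * (k+2) +
            (clV.map (Sum.inl : V → V ⊕ Bool)).length) with hjC | hjB
        · obtain ⟨t, ht, rfl⟩ :
              ∃ t, t < (clV.map (Sum.inl : V → V ⊕ Bool)).length ∧
                j = pa.length * (k+2) + t :=
            ⟨j - pa.length * (k+2), by omega, by omega⟩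
          rw [bf_C k pa _ _ _ _ ht, List.getElem_map]
          trivial
        · -- j in B region: impossible, since the clique gap has length k
          exfalso; omega
  · -- i beyond the A region
    rcases Nat.lt_or_ge i (pa.length * (k+2) +
        (clV.map (Sum.inl : V → V ⊕ Bool)).length) with hiC | hiB
    · -- i in the C region
      obtain ⟨s, hs, rfl⟩ :
          ∃ s, s < (clV.map (Sum.inl : V → V ⊕ Bool)).length ∧
            i = pa.length * (k+2) + s :=
        ⟨i - pa.length * (k+2), by omega, by omega⟩
      rw [bf_C k pa _ _ _ _ hs, List.getElem_map]
      rcases Nat.lt_or_ge j (pa.length * (k+2) +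
          (clV.map (Sum.inl : V → V ⊕ Bool)).length) with hjC | hjB
      · obtain ⟨t, ht, rfl⟩ :
            ∃ t, t < (clV.map (Sum.inl : V → V ⊕ Bool)).length ∧
              j = pa.length * (k+2) + t :=
          ⟨j - pa.length * (k+2), by omega, by omega⟩
        rw [bf_C k pa _ _ _ _ ht, List.getElem_map]
        exact hclAdj s t (by simpa using hs) (by simpa using ht) (by omega)
      · -- j in the B region
        obtain ⟨m, rfl⟩ :
            ∃ m, j = pa.length * (k+2) +
              (clV.map (Sum.inl : V → V ⊕ Bool)).length + m :=
          ⟨j - (pa.length * (k+2) + (clV.map (Sum.inl : V → V ⊕ Bool)).length),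
            by omega⟩
        by_cases hm : m % (k+1) = k
        · -- j is a vertex slot in the B region: too far from C
          exfalso
          have hmk : k ≤ m := by
            have := Nat.mod_le m (k+1); omega
          omega
        · rw [bf_Bm, if_neg hm]
          trivial
    · -- i in the B region (hence so is j)
      obtain ⟨mi, rfl⟩ :
          ∃ m, i = pa.length * (k+2) +
            (clV.map (Sum.inl : V → V ⊕ Bool)).length + m :=
        ⟨i - (pa.length * (k+2) + (clV.map (Sum.inl : V → V ⊕ Bool)).length), by omega⟩
      obtain ⟨mj, rfl⟩ :
          ∃ m, j = pa.length * (k+2) +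
            (clV.map (Sum.inl : V → V ⊕ Bool)).length + m :=
        ⟨j - (pa.length * (k+2) + (clV.map (Sum.inl : V → V ⊕ Bool)).length), by omega⟩
      by_cases hmi : mi % (k+1) = k
      · by_cases hmj : mj % (k+1) = k
        · -- both slots: distance at least k+1, contradiction
          exfalso
          have hdi := Nat.div_add_mod' mi (k+1)
          have hdj := Nat.div_add_mod' mj (k+1)
          rcases Nat.lt_trichotomy (mi / (k+1)) (mj / (k+1)) with hlt | heq | hgt
          · have hmul : (mi/(k+1)+1) * (k+1) ≤ (mj/(k+1)) * (k+1) :=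
              Nat.mul_le_mul_right _ hlt
            rw [Nat.add_mul, one_mul] at hmul
            omega
          · rw [heq] at hdi; omega
          · have hmul : (mj/(k+1)+1) * (k+1) ≤ (mi/(k+1)) * (k+1) :=
              Nat.mul_le_mul_right _ hgt
            rw [Nat.add_mul, one_mul] at hmul
            omega
        · -- vj = B, vi is B or inl
          rw [bf_Bm k pa _ _ _ _ mj, if_neg hmj]
          rcases hBshape mi with hB | ⟨v, hv⟩
          · rw [hB]; rfl
          · rw [hv]; trivial
      · -- vi = B, vj is B or inl
        rw [bf_Bm k pa _ _ _ _ mi, if_neg hmi]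
        rcases hBshape mj with hB | ⟨v, hv⟩
        · rw [hB]; rfl
        · rw [hv]; trivial

end AuxLemmas

theorem stmt12 {V : Type*} [Fintype V] (Adj : V → V → Prop) (hsymm : Symmetric Adj)
    (hloopfree : ∀ v : V, ¬ Adj v v) (k : ℕ) (hk : 2 ≤ k) :
    (∃ S : Finset V, S.card = k ∧ ∀ u ∈ S, ∀ v ∈ S, u ≠ v → Adj u v) ↔
    (∃ x : List (V ⊕ Bool), IsRealizationG (k + 1) (cliqueExtAdj Adj) x) := by
  classical
  constructor
  · -- clique → realization
    rintro ⟨S, hScard, hSadj⟩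
    have hSne : S.Nonempty := Finset.card_pos.mp (by omega)
    obtain ⟨v0, hv0⟩ := hSne
    -- building blocks
    set verts : List V := (Finset.univ : Finset V).toList with hverts
    set edges : List (V × V) :=
      ((Finset.univ ×ˢ Finset.univ).filter fun p : V × V => Adj p.1 p.2).toList
      with hedges
    have hedge : ∀ p : V × V, p ∈ edges ↔ Adj p.1 p.2 := by
      intro p
      rw [hedges, Finset.mem_toList, Finset.mem_filter]
      simp
    set pa : List ((V ⊕ Bool) × (V ⊕ Bool)) :=
      (verts.map fun v => ((Sum.inl v : V ⊕ Bool), (Sum.inr true : V ⊕ Bool))) ++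
      (edges.map fun p => ((Sum.inl p.1 : V ⊕ Bool), (Sum.inl p.2 : V ⊕ Bool)))
      with hpadef
    have hpalen : pa.length = verts.length + edges.length := by
      rw [hpadef]; simp
    have hvertsmem : ∀ v : V, v ∈ verts := by
      intro v; rw [hverts, Finset.mem_toList]; exact Finset.mem_univ v
    have hvertspos : 0 < verts.length := by
      rcases List.mem_iff_getElem.1 (hvertsmem v0) with ⟨_, h, _⟩
      omega
    set cl : List (V ⊕ Bool) := S.toList.map Sum.inl with hcldef
    set vb : List (V ⊕ Bool) := verts.map Sum.inl with hvbdef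
    have hclen : cl.length = k := by
      rw [hcldef, List.length_map, Finset.length_toList, hScard]
    set N : ℕ := pa.length * (k+2) + cl.length + (verts.length * (k+1) + k) with hN
    set f : ℕ → V ⊕ Bool := bf k pa cl vb (Sum.inr true) (Sum.inr false) with hf
    refine ⟨List.ofFn (fun i : Fin N => f i), ?_, ?_, ?_⟩
    case _ =>
      -- nonempty
      have : (List.ofFn (fun i : Fin N => f i)).length = N := List.length_ofFn
      intro hnil
      rw [hnil] at this
      simp at this
      omega
    case _ => ?_
    case _ => ?_
    -- getElem? of the list
    all_goals
      have hxget : ∀ {n : ℕ}, n < N →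
          (List.ofFn (fun i : Fin N => f i))[n]? = some (f n) := by
        intro n hn
        have hn' : n < (List.ofFn (fun i : Fin N => f i)).length := by
          rw [List.length_ofFn]; exact hn
        rw [List.getElem?_eq_getElem hn', List.getElem_ofFn]
    all_goals
      have hAin : ∀ q r : ℕ, q < pa.length → r < k + 2 → q * (k+2) + r < N := by
        intro q r hq hr
        have h1 : (q+1) * (k+2) ≤ pa.length * (k+2) := Nat.mul_le_mul_right _ hq
        rw [Nat.add_mul, one_mul] at h1
        omega
    all_goals
      have hpaV : ∀ (qv : ℕ) (h : qv < verts.length),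
          ∃ hq : qv < pa.length, pa[qv] = (Sum.inl verts[qv], Sum.inr true) := by
        intro qv h
        have hq : qv < pa.length := by omega
        have h2 : pa[qv]? = some (Sum.inl verts[qv], Sum.inr true) := by
          rw [hpadef, List.getElem?_append, if_pos (by simpa using h),
            List.getElem?_map, List.getElem?_eq_getElem h]
          rfl
        rw [List.getElem?_eq_getElem hq] at h2
        exact ⟨hq, Option.some.inj h2⟩
    all_goals
      have hBvert : ∀ (qv : ℕ) (h : qv < verts.length),
          f (pa.length * (k+2) + cl.length + (qv * (k+1) + k)) = Sum.inl verts[qv] := by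
        intro qv h
        rw [hf]
        rw [bf_Bslot k pa cl vb _ _ (by simpa [hvbdef] using h)]
        have h2 : vb[qv]? = some (Sum.inl verts[qv]) := by
          rw [hvbdef, List.getElem?_map, List.getElem?_eq_getElem h]
          rfl
        rw [List.getElem?_eq_getElem (show qv < vb.length by simpa [hvbdef] using h)] at h2
        exact Option.some.inj h2
    case _ =>
      -- every vertex occurs
      intro w
      rw [List.mem_ofFn]
      rcases w with u | s
      · obtain ⟨qv, hqv, hval⟩ := List.mem_iff_getElem.1 (hvertsmem u)
        obtain ⟨hq, hpaq⟩ := hpaV qv hqv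
        refine ⟨⟨qv * (k+2), hAin qv 0 hq (by omega)⟩, ?_⟩
        show f (qv * (k+2)) = Sum.inl u
        have := bf_A k pa cl vb (Sum.inr true) (Sum.inr false) hq
          (show (0:ℕ) < k + 2 by omega)
        rw [hf]
        have h0 : qv * (k+2) = qv * (k+2) + 0 := by omega
        rw [h0, this, if_pos rfl, hpaq, ← hval]
      · cases s
        · -- b
          refine ⟨⟨pa.length * (k+2) + cl.length + 0, by omega⟩, ?_⟩
          show f (pa.length * (k+2) + cl.length + 0) = Sum.inr false
          rw [hf, bf_Bm, if_neg (by rw [Nat.zero_mod]; omega : ¬ (0 % (k+1) = k))]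
        · -- a
          have hq : 0 < pa.length := by omega
          refine ⟨⟨0 * (k+2) + 2, hAin 0 2 hq (by omega)⟩, ?_⟩
          show f (0 * (k+2) + 2) = Sum.inr true
          rw [hf, bf_A k pa cl vb _ _ hq (by omega : (2:ℕ) < k + 2),
            if_neg (by omega : (2:ℕ) ≠ 0), if_neg (by omega : (2:ℕ) ≠ 1)]
    case _ =>
      -- adjacency iff
      intro u v
      constructor
      · -- completeness
        intro hadj
        have harc : ∀ (n1 n2 : ℕ), n1 < n2 → n2 < n1 + (k+1) → n2 < N →
            ∀ z1 z2, f n1 = z1 → f n2 = z2 →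
            seqArc (k+1) (List.ofFn (fun i : Fin N => f i)) z1 z2 := by
          intro n1 n2 h12 hwin h2N z1 z2 hz1 hz2
          refine ⟨n1, n2, h12, hwin, ?_, ?_⟩
          · rw [hxget (by omega), hz1]
          · rw [hxget h2N, hz2]
        rcases u with u' | s
        · rcases v with v' | t
          · -- inl, inl : an edge of G
            have hAdj : Adj u' v' := hadj
            obtain ⟨e, he, heq⟩ := List.mem_iff_getElem.1 ((hedge (u', v')).2 hAdj)
            have hq : verts.length + e < pa.length := by omega
            have hpaq : pa[verts.length + e] = (Sum.inl u', Sum.inl v') := by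
              have h2 : pa[verts.length + e]? =
                  some ((Sum.inl u' : V ⊕ Bool), (Sum.inl v' : V ⊕ Bool)) := by
                rw [hpadef, List.getElem?_append_right (by simp)]
                simp only [List.length_map]
                have h3 : verts.length + e - verts.length = e := by omega
                rw [h3, List.getElem?_map, List.getElem?_eq_getElem he, heq]
                rfl
              rw [List.getElem?_eq_getElem hq] at h2
              exact Option.some.inj h2
            left
            refine harc ((verts.length + e) * (k+2)) ((verts.length + e) * (k+2) + 1)
              (by omega) (by omega) (hAin _ 1 hq (by omega)) _ _ ?_ ?_
            · have h0 : (verts.length + e) * (k+2)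
                  = (verts.length + e) * (k+2) + 0 := by omega
              rw [hf, h0, bf_A k pa cl vb _ _ hq (by omega : (0:ℕ) < k+2),
                if_pos rfl, hpaq]
            · rw [hf, bf_A k pa cl vb _ _ hq (by omega : (1:ℕ) < k+2),
                if_neg (by omega : (1:ℕ) ≠ 0), if_pos rfl, hpaq]
          · -- inl, inr
            obtain ⟨qv, hqv, hval⟩ := List.mem_iff_getElem.1 (hvertsmem u')
            cases t
            · -- u' and b
              left
              have hmul : (qv+1) * (k+1) ≤ verts.length * (k+1) :=
                Nat.mul_le_mul_right _ hqv
              refine harc (pa.length * (k+2) + cl.length + (qv * (k+1) + k))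
                (pa.length * (k+2) + cl.length + (qv * (k+1) + k + 1))
                (by omega) (by omega)
                (by rw [Nat.add_mul, one_mul] at hmul; omega) _ _ ?_ ?_
              · rw [hBvert qv hqv, hval]
              · have h1 : qv * (k+1) + k + 1 = (qv + 1) * (k+1) := by ring
                have h2 : pa.length * (k+2) + cl.length + (qv * (k+1) + k + 1)
                    = pa.length * (k+2) + cl.length + ((qv+1) * (k+1)) := by omega
                rw [hf, h2, bf_Bm,
                  if_neg (by rw [Nat.mul_mod_left]; omega : ¬ ((qv+1)*(k+1)) % (k+1) = k)]
            · -- u' and a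
              left
              obtain ⟨hq, hpaq⟩ := hpaV qv hqv
              refine harc (qv * (k+2)) (qv * (k+2) + 1) (by omega) (by omega)
                (hAin qv 1 hq (by omega)) _ _ ?_ ?_
              · have h0 : qv * (k+2) = qv * (k+2) + 0 := by omega
                rw [hf, h0, bf_A k pa cl vb _ _ hq (by omega : (0:ℕ) < k+2),
                  if_pos rfl, hpaq, hval]
              · rw [hf, bf_A k pa cl vb _ _ hq (by omega : (1:ℕ) < k+2),
                  if_neg (by omega : (1:ℕ) ≠ 0), if_pos rfl, hpaq]
        · -- inr, _
          rcases v with v' | t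
          · -- s and inl v'
            obtain ⟨qv, hqv, hval⟩ := List.mem_iff_getElem.1 (hvertsmem v')
            cases s
            · -- b and v'
              right
              have hmul : (qv+1) * (k+1) ≤ verts.length * (k+1) :=
                Nat.mul_le_mul_right _ hqv
              refine harc (pa.length * (k+2) + cl.length + (qv * (k+1) + k))
                (pa.length * (k+2) + cl.length + (qv * (k+1) + k + 1))
                (by omega) (by omega)
                (by rw [Nat.add_mul, one_mul] at hmul; omega) _ _ ?_ ?_
              · rw [hBvert qv hqv, hval]
              · have h2 : pa.length * (k+2) + cl.length + (qv * (k+1) + k + 1)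
                    = pa.length * (k+2) + cl.length + ((qv+1) * (k+1)) := by
                  rw [Nat.add_mul, one_mul]; omega
                rw [hf, h2, bf_Bm,
                  if_neg (by rw [Nat.mul_mod_left]; omega :
                    ¬ ((qv+1)*(k+1)) % (k+1) = k)]
            · -- a and v'
              right
              obtain ⟨hq, hpaq⟩ := hpaV qv hqv
              refine harc (qv * (k+2)) (qv * (k+2) + 1) (by omega) (by omega)
                (hAin qv 1 hq (by omega)) _ _ ?_ ?_
              · have h0 : qv * (k+2) = qv * (k+2) + 0 := by omega
                rw [hf, h0, bf_A k pa cl vb _ _ hq (by omega : (0:ℕ) < k+2),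
                  if_pos rfl, hpaq, hval]
              · rw [hf, bf_A k pa cl vb _ _ hq (by omega : (1:ℕ) < k+2),
                  if_neg (by omega : (1:ℕ) ≠ 0), if_pos rfl, hpaq]
          · -- inr s, inr t with s = t
            have hst : s = t := hadj
            subst hst
            cases s
            · -- b-b
              left
              refine harc (pa.length * (k+2) + cl.length + 0)
                (pa.length * (k+2) + cl.length + 1) (by omega) (by omega)
                (by omega) _ _ ?_ ?_
              · rw [hf, bf_Bm, if_neg (by rw [Nat.zero_mod]; omega : ¬ (0 % (k+1) = k))]
              · rw [hf, bf_Bm, if_neg (by rw [Nat.mod_eq_of_lt (by omega)]; omega :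
                  ¬ (1 % (k+1) = k))]
            · -- a-a
              left
              have hq : 0 < pa.length := by omega
              refine harc (0 * (k+2) + 2) (0 * (k+2) + 3) (by omega) (by omega)
                (hAin 0 3 hq (by omega)) _ _ ?_ ?_
              · rw [hf, bf_A k pa cl vb _ _ hq (by omega : (2:ℕ) < k+2),
                  if_neg (by omega : (2:ℕ) ≠ 0), if_neg (by omega : (2:ℕ) ≠ 1)]
              · rw [hf, bf_A k pa cl vb _ _ hq (by omega : (3:ℕ) < k+2),
                  if_neg (by omega : (3:ℕ) ≠ 0), if_neg (by omega : (3:ℕ) ≠ 1)]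
      · -- soundness
        intro hseq
        have hpa : ∀ p ∈ pa,
            cliqueExtAdj Adj p.1 p.2 ∧ p.1 ≠ Sum.inr false ∧ p.2 ≠ Sum.inr false := by
          intro p hp
          rw [hpadef, List.mem_append] at hp
          rcases hp with hp | hp
          · obtain ⟨w, _, rfl⟩ := List.mem_map.1 hp
            refine ⟨trivial, by simp, by simp⟩
          · obtain ⟨e, he, rfl⟩ := List.mem_map.1 hp
            exact ⟨(hedge e).1 he, by simp, by simp⟩
        have hclS : S.toList.length = k := by
          rw [Finset.length_toList, hScard]
        have hclAdj : ∀ (s t : ℕ) (hs : s < S.toList.length)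
            (ht : t < S.toList.length), s ≠ t → Adj S.toList[s] S.toList[t] := by
          intro s t hs ht hst
          refine hSadj _ (Finset.mem_toList.1 (List.getElem_mem hs))
            _ (Finset.mem_toList.1 (List.getElem_mem ht)) ?_
          intro heq
          exact hst ((S.nodup_toList.getElem_inj_iff).1 heq)
        have hval : ∀ {n : ℕ} {z : V ⊕ Bool},
            (List.ofFn (fun i : Fin N => f i))[n]? = some z → f n = z := by
          intro n z h
          obtain ⟨hn, hz⟩ := List.getElem?_eq_some_iff.1 h
          rw [List.getElem_ofFn] at hz
          exact hz
        rcases hseq with ⟨n1, n2, h12, hwin, hz1, hz2⟩ | ⟨n1, n2, h12, hwin, hz1, hz2⟩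
        · have := bf_sound Adj hk pa S.toList verts hpa hclS hclAdj h12
            (by omega : n2 ≤ n1 + k)
          rw [← hcldef, ← hvbdef, ← hf] at this
          rwa [hval hz1, hval hz2] at this
        · have := bf_sound Adj hk pa S.toList verts hpa hclS hclAdj h12
            (by omega : n2 ≤ n1 + k)
          rw [← hcldef, ← hvbdef, ← hf] at this
          rw [hval hz1, hval hz2] at this
          exact ceSymm Adj hsymm this
  · -- realization → clique
    rintro ⟨x, hne, hmem, hiff⟩
    have extract : ∀ p0 : ℕ,
        (∀ t : ℕ, t < k → ∃ v : V, x[p0 + 1 + t]? = some (Sum.inl v)) →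
        ∃ S : Finset V, S.card = k ∧ ∀ u ∈ S, ∀ v ∈ S, u ≠ v → Adj u v := by
      intro p0 hg
      choose g hgs using hg
      set g' : Fin k → V := fun t => g t.1 t.2 with hg'
      have key : ∀ s t : Fin k, (s : ℕ) < (t : ℕ) → Adj (g' s) (g' t) := by
        intro s t hlt
        have harc : seqArc (k+1) x (Sum.inl (g' s)) (Sum.inl (g' t)) := by
          refine ⟨p0 + 1 + s, p0 + 1 + t, by omega, ?_, hgs s s.2, hgs t t.2⟩
          have := t.2
          omega
        exact (hiff _ _).2 (Or.inl harc)
      have hAdj : ∀ s t : Fin k, s ≠ t → Adj (g' s) (g' t) := by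
        intro s t hst
        rcases Nat.lt_trichotomy (s : ℕ) (t : ℕ) with hlt | heq | hgt
        · exact key s t hlt
        · exact absurd (Fin.ext heq) hst
        · exact hsymm (key t s hgt)
      have hginj : Function.Injective g' := by
        intro s t h
        by_contra hst
        exact hloopfree (g' t) (h ▸ hAdj s t hst)
      refine ⟨Finset.univ.image g', ?_, ?_⟩
      · rw [Finset.card_image_of_injective _ hginj, Finset.card_univ, Fintype.card_fin]
      · intro u hu v hv huv
        obtain ⟨s, _, rfl⟩ := Finset.mem_image.1 hu
        obtain ⟨t, _, rfl⟩ := Finset.mem_image.1 hv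
        exact hAdj s t (fun h => huv (by rw [h]))
    obtain ⟨ia, hia⟩ := List.mem_iff_getElem?.1 (hmem (Sum.inr true))
    obtain ⟨ib, hib⟩ := List.mem_iff_getElem?.1 (hmem (Sum.inr false))
    have hab : ¬ seqEdge (k+1) x (Sum.inr true) (Sum.inr false) := by
      intro h
      have hc : (true : Bool) = false := (hiff _ _).2 h
      simp at hc
    set Q : ℕ → Prop := fun d => ∃ i j : ℕ, x[i]? = some (Sum.inr true) ∧
      x[j]? = some (Sum.inr false) ∧ (j = i + d ∨ i = j + d) with hQ
    have hQex : ∃ d, Q d := by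
      rcases Nat.le_total ia ib with h | h
      · exact ⟨ib - ia, ia, ib, hia, hib, Or.inl (by omega)⟩
      · exact ⟨ia - ib, ia, ib, hia, hib, Or.inr (by omega)⟩
    obtain ⟨i, j, hxi, hxj, hor⟩ : Q (Nat.find hQex) := Nat.find_spec hQex
    have hmin : ∀ d, d < Nat.find hQex → ¬ Q d := fun d hd => Nat.find_min hQex hd
    have hd0k : k + 1 ≤ Nat.find hQex := by
      by_contra hlt
      push_neg at hlt
      have hd0pos : Nat.find hQex ≠ 0 := by
        intro h0
        rw [h0] at hor
        have hij : i = j := by omega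
        rw [hij, hxj] at hxi
        simp at hxi
      apply hab
      rcases hor with h | h
      · exact Or.inl ⟨i, j, by omega, by omega, hxi, hxj⟩
      · exact Or.inr ⟨j, i, by omega, by omega, hxj, hxi⟩
    have hjlen : j < x.length := (List.getElem?_eq_some_iff.1 hxj).1
    have hilen : i < x.length := (List.getElem?_eq_some_iff.1 hxi).1
    rcases hor with hcase | hcase
    · -- a at i, b at j = i + d0
      apply extract i
      intro t ht
      have hpos : i + 1 + t < x.length := by omega
      have hvaleq : x[i+1+t]? = some (x[i+1+t]) := List.getElem?_eq_getElem hpos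
      rcases hxval : x[i+1+t] with w | s
      · exact ⟨w, by rw [hvaleq, hxval]⟩
      · exfalso
        cases s
        · exact hmin (t+1) (by omega)
            ⟨i, i+1+t, hxi, by rw [hvaleq, hxval], Or.inl (by omega)⟩
        · exact hmin (Nat.find hQex - (1+t)) (by omega)
            ⟨i+1+t, j, by rw [hvaleq, hxval], hxj, Or.inl (by omega)⟩
    · -- b at j, a at i = j + d0
      apply extract j
      intro t ht
      have hpos : j + 1 + t < x.length := by omega
      have hvaleq : x[j+1+t]? = some (x[j+1+t]) := List.getElem?_eq_getElem hpos
      rcases hxval : x[j+1+t] with w | s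
      · exact ⟨w, by rw [hvaleq, hxval]⟩
      · exfalso
        cases s
        · exact hmin (Nat.find hQex - (1+t)) (by omega)
            ⟨i, j+1+t, hxi, by rw [hvaleq, hxval], Or.inr (by omega)⟩
        · exact hmin (t+1) (by omega)
            ⟨j+1+t, j, by rw [hvaleq, hxval], hxj, Or.inr (by omega)⟩
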